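/- (Evaluation agreement under padding) Let Γ be a static context and μ₁, μ₂ stores with dom(μ(Γ)) ⊆ dom(μ₁), dom(⌈μ⌉(Γ)) ⊆ dom(μ₂), and for each declared x: μ₂(x_i) = μ₁(x_i) for i ≤ Γ(x), and μ₂(x_i) = 0 for i in the padding region. If Γ ⊢ e : t, then eval_{Γ,μ₁}(e_i) = eval_{⌈Γ⌉_M,μ₂}(e_i) for all i ≤ t. -/

import Mathlib

/-- Rounding up to the nearest multiple of `M`. -/
noncomputable def roundUp (M d : ℕ) : ℕ := sInf {m : ℕ | ∃ n : ℕ, m = n * M ∧ d ≤ m}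

/-- Tensor types are tuples of naturals. -/
abbrev Ty := List ℕ
/-- Multi-indices. -/
abbrev Index := List ℕ

/-- `IdxLe i t`: the multi-index `i` (with components in {1,2,…}) is bounded by `t`. -/
def IdxLe (i t : Index) : Prop :=
  i.length = t.length ∧ ∀ l, l < t.length → 1 ≤ i.getD l 0 ∧ i.getD l 0 ≤ t.getD l 0

/-- Swap the `m`-th and `n`-th components (1-based). -/
def swapIdx (t : List ℕ) (m n : ℕ) : List ℕ :=
  (t.set (m-1) (t.getD (n-1) 0)).set (n-1) (t.getD (m-1) 0)

/-- Delete the `m`-th and `n`-th components (1-based, `m < n`). -/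
def delete2 (t : List ℕ) (m n : ℕ) : List ℕ :=
  (t.eraseIdx (n-1)).eraseIdx (m-1)

/-- Insert value `l` at the `m`-th and `n`-th positions (1-based, `m < n`). -/
def insert2 (i : List ℕ) (m n l : ℕ) : List ℕ :=
  (i.insertIdx (m-1) l).insertIdx (n-1) l

/-- Pad a tensor type componentwise. -/
noncomputable def padT (M : ℕ) (t : Ty) : Ty := t.map (roundUp M)

/-- The padding region of a type: indices within the padded bounds but not the original ones. -/
def PadReg (M : ℕ) (t : Ty) (i : Index) : Prop := ¬ IdxLe i t ∧ IdxLe i (padT M t)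

inductive Op | add | sub | mul | div
deriving DecidableEq

/-- Expressions of the tensor model language. -/
inductive Expr
| var : String → Expr
| paren : Expr → Expr
| binop : Op → Expr → Expr → Expr
| prod : Expr → Expr → Expr
| trans : Expr → ℕ → ℕ → Expr
| contr : Expr → ℕ → ℕ → Expr

/-- A static context maps identifiers to tensor types. -/
abbrev Ctx := String → Option Ty

/-- Componentwise padding of a static context. -/
noncomputable def padCtx (M : ℕ) (Γ : Ctx) : Ctx := fun x => (Γ x).map (padT M)

/-- The typing rules of the tensor model language. -/
inductive HasTy (Γ : Ctx) : Expr → Ty → Prop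
| var {x t} : Γ x = some t → HasTy Γ (.var x) t
| paren {e t} : HasTy Γ e t → HasTy Γ (.paren e) t
| prod {e₀ e₁ t₀ t₁} : HasTy Γ e₀ t₀ → HasTy Γ e₁ t₁ → HasTy Γ (.prod e₀ e₁) (t₀ ++ t₁)
| trans {e t m n} : HasTy Γ e t → 1 ≤ m → m < n → n ≤ t.length →
    HasTy Γ (.trans e m n) (swapIdx t m n)
| contr {e t m n} : HasTy Γ e t → 1 ≤ m → m < n → n ≤ t.length →
    t.getD (m-1) 0 = t.getD (n-1) 0 → HasTy Γ (.contr e m n) (delete2 t m n)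
| elem {op e₀ e₁ t} : HasTy Γ e₀ t → HasTy Γ e₁ t → HasTy Γ (.binop op e₀ e₁) t
| smul {e₀ e₁ t} : HasTy Γ e₀ [] → HasTy Γ e₁ t → HasTy Γ (.binop .mul e₀ e₁) t
| sdiv {e₀ e₁ t} : HasTy Γ e₀ t → HasTy Γ e₁ [] → HasTy Γ (.binop .div e₀ e₁) t

/-- Syntax-directed type inference. -/
def inferTy (Γ : Ctx) : Expr → Option Ty
| .var x => Γ x
| .paren e => inferTy Γ e
| .prod e₀ e₁ => do pure ((← inferTy Γ e₀) ++ (← inferTy Γ e₁))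
| .trans e m n => do
    let t ← inferTy Γ e
    if 1 ≤ m ∧ m < n ∧ n ≤ t.length then pure (swapIdx t m n) else none
| .contr e m n => do
    let t ← inferTy Γ e
    if 1 ≤ m ∧ m < n ∧ n ≤ t.length ∧ t.getD (m-1) 0 = t.getD (n-1) 0 then
      pure (delete2 t m n) else none
| .binop op e₀ e₁ => do
    let t₀ ← inferTy Γ e₀
    let t₁ ← inferTy Γ e₁
    if t₀ = t₁ then pure t₀
    else if op = .mul ∧ t₀ = [] then pure t₁
    else if op = .div ∧ t₁ = [] then pure t₀
    else none

/-- The value domain `𝕍 ∪ {•}`: `none` is the undefined value `•`. -/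
abbrev W (V : Type) := Option V

/-- Extended addition: `•` is absorbing. -/
def wadd {V : Type} [Add V] : W V → W V → W V
| some a, some b => some (a + b)
| _, _ => none

def wsub {V : Type} [Sub V] : W V → W V → W V
| some a, some b => some (a - b)
| _, _ => none

def wmul {V : Type} [Mul V] : W V → W V → W V
| some a, some b => some (a * b)
| _, _ => none

/-- Controlled division on `𝕍 ∪ {•}`: `0/0 = 0`, `0/• = 0`, otherwise `•` absorbs
    and division by zero is undefined. -/
def wdiv {V : Type} [Field V] [DecidableEq V] : W V → W V → W V
| some a, some b => if b = 0 then (if a = 0 then some 0 else none) else some (a / b)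
| some a, none => if a = 0 then some 0 else none
| none, _ => none

def applyOp {V : Type} [Field V] [DecidableEq V] : Op → W V → W V → W V
| .add => wadd
| .sub => wsub
| .mul => wmul
| .div => wdiv

/-- A dynamic store: a partial map from subscripted identifiers to `𝕍 ∪ {•}`. -/
abbrev Store (V : Type) := String × Index → Option (W V)

/-- Denotational semantics of expression evaluation; `none` means evaluation is stuck
    (not well-defined), `some w` means the result is the value `w ∈ 𝕍 ∪ {•}`. -/
def eval {V : Type} [Field V] [DecidableEq V] (Γ : Ctx) (μ : Store V) :
    Expr → Index → Option (W V)
| .var x, i => μ (x, i)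
| .paren e, i => eval Γ μ e i
| .prod e₀ e₁, i => do
    let t₀ ← inferTy Γ e₀
    let v₀ ← eval Γ μ e₀ (i.take t₀.length)
    let v₁ ← eval Γ μ e₁ (i.drop t₀.length)
    pure (wmul v₀ v₁)
| .trans e m n, i => eval Γ μ e (swapIdx i m n)
| .contr e m n, i => do
    let t ← inferTy Γ e
    let vs ← (List.range (t.getD (m-1) 0)).mapM (fun l => eval Γ μ e (insert2 i m n (l+1)))
    pure (vs.foldl wadd (some 0))
| .binop op e₀ e₁, i => do
    let t₀ ← inferTy Γ e₀
    let t₁ ← inferTy Γ e₁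
    if op = .mul ∧ t₀ = [] then
      let v₀ ← eval Γ μ e₀ []
      let v₁ ← eval Γ μ e₁ i
      pure (wmul v₀ v₁)
    else if op = .div ∧ t₁ = [] then
      let v₀ ← eval Γ μ e₀ i
      let v₁ ← eval Γ μ e₁ []
      pure (wdiv v₀ v₁)
    else
      let v₀ ← eval Γ μ e₀ i
      let v₁ ← eval Γ μ e₁ i
      pure (applyOp op v₀ v₁)

open Classical

/-- The unique initial store determined by `Γ` and the ambient values `v`. -/
noncomputable def initStore {V : Type} (Γ : Ctx) (v : String → Index → W V) : Store V :=
  fun p => match Γ p.1 with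
  | some t => if IdxLe p.2 t then some (v p.1 p.2) else none
  | none => none

/-- The unique padded initial store: values on the original domain, zero on padding. -/
noncomputable def initStoreP {V : Type} [Zero V] (M : ℕ) (Γ : Ctx)
    (v : String → Index → W V) : Store V :=
  fun p => match Γ p.1 with
  | some t =>
      if IdxLe p.2 t then some (v p.1 p.2)
      else if IdxLe p.2 (padT M t) then some (some 0)
      else none
  | none => none

/-- A statement `x = e`. -/
abbrev Stmt := String × Expr

/-- Well-formedness of a statement list in context `Γ`. -/
def Ok (Γ : Ctx) (ss : List Stmt) : Prop :=
  ∀ s ∈ ss, ∃ t, Γ s.1 = some t ∧ HasTy Γ s.2 t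

/-- Evaluation of a single assignment statement (rule ev-stmt). -/
inductive StepStmt {V : Type} [Field V] [DecidableEq V] (Γ : Ctx) :
    Store V → Stmt → Store V → Prop
| mk {μ : Store V} {x e t} :
    Γ x = some t →
    (∀ i, IdxLe i t → μ (x, i) ≠ none) →
    (∀ i, IdxLe i t → (eval Γ μ e i).isSome) →
    StepStmt Γ μ (x, e)
      (fun p => if p.1 = x ∧ IdxLe p.2 t then eval Γ μ e p.2 else μ p)

/-- Evaluation of a statement sequence. -/
inductive StepStmts {V : Type} [Field V] [DecidableEq V] (Γ : Ctx) :
    Store V → List Stmt → Store V → Prop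
| nil {μ} : StepStmts Γ μ [] μ
| cons {μ μ' μ'' s ss} : StepStmt Γ μ s μ' → StepStmts Γ μ' ss μ'' →
    StepStmts Γ μ (s :: ss) μ''

/-- Evaluation of a single assignment statement with a padded store (rule ev-pad-stmt). -/
inductive StepStmtP {V : Type} [Field V] [DecidableEq V] (M : ℕ) (Γ : Ctx) :
    Store V → Stmt → Store V → Prop
| mk {μ : Store V} {x e t} :
    Γ x = some t →
    (∀ i, IdxLe i (padT M t) → μ (x, i) ≠ none) →
    (∀ i, IdxLe i (padT M t) → (eval (padCtx M Γ) μ e i).isSome) →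
    StepStmtP M Γ μ (x, e)
      (fun p => if p.1 = x ∧ IdxLe p.2 (padT M t) then eval (padCtx M Γ) μ e p.2 else μ p)

inductive StepStmtsP {V : Type} [Field V] [DecidableEq V] (M : ℕ) (Γ : Ctx) :
    Store V → List Stmt → Store V → Prop
| nil {μ} : StepStmtsP M Γ μ [] μ
| cons {μ μ' μ'' s ss} : StepStmtP M Γ μ s μ' → StepStmtsP M Γ μ' ss μ'' →
    StepStmtsP M Γ μ (s :: ss) μ''

lemma getD_set' (l : List ℕ) (k a j : ℕ) :
    (l.set k a).getD j 0 = if k = j ∧ j < l.length then a else l.getD j 0 := by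
  by_cases h : j < l.length
  · rw [List.getD_eq_getElem _ _ (by simpa using h)]
    rw [List.getElem_set]
    by_cases hkj : k = j <;> simp [hkj, h, List.getD_eq_getElem _ _ h]
  · rw [List.getD_eq_default _ _ (by simpa using not_lt.1 h), List.getD_eq_default _ _ (not_lt.1 h)]
    simp [h]

lemma getD_insertIdx' (l : List ℕ) (k a j : ℕ) (hk : k ≤ l.length) :
    (l.insertIdx k a).getD j 0 =
      if j < k then l.getD j 0 else if j = k then a else l.getD (j-1) 0 := by
  have hlen : (l.insertIdx k a).length = l.length + 1 := List.length_insertIdx_of_le_length hk a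
  rcases lt_trichotomy j k with h | h | h
  · have hj : j < l.length := lt_of_lt_of_le h hk
    rw [List.getD_eq_getElem _ _ (by omega), List.getElem_insertIdx_of_lt h (by omega),
      List.getD_eq_getElem _ _ hj]
    simp [h]
  · subst h
    rw [List.getD_eq_getElem _ _ (by omega), List.getElem_insertIdx_self (by omega)]
    simp
  · rw [if_neg (by omega), if_neg (by omega)]
    by_cases hj : j - 1 < l.length
    · rw [List.getD_eq_getElem _ _ (by omega : j < (l.insertIdx k a).length),
        List.getD_eq_getElem _ _ hj]
      have e1 : (l.insertIdx k a)[j]'(by omega) = (l.insertIdx k a)[k + (j-1-k)+1]'(by omega) := by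
        congr 1; omega
      have e2 : l[j-1]'hj = l[k+(j-1-k)]'(by omega) := by congr 1; omega
      rw [e1, e2]
      exact List.getElem_insertIdx_add_succ l a k (j-1-k) (by omega) (by omega)
    · rw [List.getD_eq_default _ _ (by omega), List.getD_eq_default _ _ (by omega)]

lemma getD_eraseIdx' (l : List ℕ) (k j : ℕ) (hk : k < l.length) :
    (l.eraseIdx k).getD j 0 = if j < k then l.getD j 0 else l.getD (j+1) 0 := by
  have hlen : (l.eraseIdx k).length = l.length - 1 := by rw [List.length_eraseIdx]; simp [hk]
  by_cases hj : j < l.length - 1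
  · rw [List.getD_eq_getElem _ _ (by omega), List.getElem_eraseIdx]
    by_cases h : j < k
    · rw [dif_pos h, if_pos h, List.getD_eq_getElem _ _ (by omega : j < l.length)]
    · rw [dif_neg h, if_neg h, List.getD_eq_getElem _ _ (by omega : j + 1 < l.length)]
  · rw [List.getD_eq_default _ _ (by omega), if_neg (by omega),
      List.getD_eq_default _ _ (by omega : l.length ≤ j + 1)]

lemma roundUp_ge (M d : ℕ) (hM : 1 ≤ M) : d ≤ roundUp M d := by
  have hne : {m : ℕ | ∃ n : ℕ, m = n * M ∧ d ≤ m}.Nonempty :=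
    ⟨d * M, d, rfl, Nat.le_mul_of_pos_right d hM⟩
  obtain ⟨n, -, hd⟩ := Nat.sInf_mem hne
  exact hd

lemma roundUp_zero (M : ℕ) : roundUp M 0 = 0 :=
  Nat.sInf_eq_zero.2 (Or.inl ⟨0, by simp, le_refl 0⟩)

lemma padT_length (M : ℕ) (t : Ty) : (padT M t).length = t.length := by simp [padT]

lemma padT_getD (M : ℕ) (t : Ty) (l : ℕ) :
    (padT M t).getD l 0 = roundUp M (t.getD l 0) := by
  have := List.getD_map t 0 (n := l) (roundUp M)
  rwa [roundUp_zero] at this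

lemma padT_append (M : ℕ) (t₀ t₁ : Ty) : padT M (t₀ ++ t₁) = padT M t₀ ++ padT M t₁ := by
  simp [padT]

lemma padT_nil (M : ℕ) : padT M [] = [] := rfl

lemma padT_eq_nil (M : ℕ) (t : Ty) : padT M t = [] ↔ t = [] := by simp [padT]

lemma IdxLe_pad (M : ℕ) (hM : 1 ≤ M) {i t} (h : IdxLe i t) : IdxLe i (padT M t) := by
  obtain ⟨hl, hb⟩ := h
  refine ⟨by rw [hl, padT_length], fun l hlt => ?_⟩
  rw [padT_length] at hlt
  obtain ⟨h1, h2⟩ := hb l hlt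
  exact ⟨h1, by rw [padT_getD]; exact le_trans h2 (roundUp_ge M _ hM)⟩

lemma IdxLe_nil {i : Index} : IdxLe i [] ↔ i = [] := by
  constructor
  · rintro ⟨hl, -⟩; exact List.eq_nil_of_length_eq_zero hl
  · rintro rfl; exact ⟨rfl, fun l hl => by simp at hl⟩

lemma PadReg_nil (M : ℕ) (i : Index) : ¬ PadReg M [] i := by
  rintro ⟨h1, h2⟩; rw [padT_nil, IdxLe_nil] at h2; exact h1 (IdxLe_nil.2 h2)

section swap
variable {t i : List ℕ} {m n : ℕ}

lemma swapIdx_length (t : List ℕ) (m n : ℕ) : (swapIdx t m n).length = t.length := by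
  simp [swapIdx]

lemma swapIdx_getD (t : List ℕ) (m n j : ℕ) (hm : m - 1 < t.length) (hn : n - 1 < t.length)
    (hd : m - 1 ≠ n - 1) :
    (swapIdx t m n).getD j 0 =
      if j = n - 1 then t.getD (m-1) 0 else if j = m - 1 then t.getD (n-1) 0
      else t.getD j 0 := by
  unfold swapIdx
  rw [getD_set', getD_set']
  simp only [List.length_set]
  by_cases h1 : j = n - 1
  · rw [if_pos ⟨h1.symm, by omega⟩, if_pos h1]
  · rw [if_neg (show ¬(n - 1 = j ∧ j < t.length) from fun h => h1 h.1.symm), if_neg h1]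
    by_cases h2 : j = m - 1
    · rw [if_pos ⟨h2.symm, by omega⟩, if_pos h2]
    · rw [if_neg (show ¬(m - 1 = j ∧ j < t.length) from fun h => h2 h.1.symm), if_neg h2]

lemma padT_swapIdx (M : ℕ) (t : List ℕ) (m n : ℕ) (hm : m - 1 < t.length)
    (hn : n - 1 < t.length) : padT M (swapIdx t m n) = swapIdx (padT M t) m n := by
  unfold swapIdx padT
  rw [List.map_set, List.map_set]
  rw [← padT_getD M t (n-1), ← padT_getD M t (m-1)]
  rfl

lemma IdxLe_swapIdx (hm : 1 ≤ m) (hmn : m < n) (hn : n ≤ t.length) (hlen : i.length = t.length) :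
    IdxLe i (swapIdx t m n) ↔ IdxLe (swapIdx i m n) t := by
  have hm' : m - 1 < t.length := by omega
  have hn' : n - 1 < t.length := by omega
  have him : m - 1 < i.length := by omega
  have hin : n - 1 < i.length := by omega
  have hd : m - 1 ≠ n - 1 := by omega
  have hd2 : n - 1 ≠ m - 1 := by omega
  constructor
  · rintro ⟨hl, hb⟩
    refine ⟨by rw [swapIdx_length, hlen], fun l hlt => ?_⟩
    rw [swapIdx_getD i m n l him hin hd]
    by_cases h1 : l = n - 1
    · have := hb (m-1) (by rw [swapIdx_length]; omega)
      rw [swapIdx_getD t m n (m-1) hm' hn' hd] at this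
      simpa [h1, hd, hd2] using this
    · by_cases h2 : l = m - 1
      · have := hb (n-1) (by rw [swapIdx_length]; omega)
        rw [swapIdx_getD t m n (n-1) hm' hn' hd] at this
        simpa [h1, h2, hd, hd2] using this
      · have := hb l (by rw [swapIdx_length]; exact hlt)
        rw [swapIdx_getD t m n l hm' hn' hd] at this
        simpa [h1, h2, hd, hd2] using this
  · rintro ⟨hl, hb⟩
    refine ⟨by rw [hlen, swapIdx_length], fun l hlt => ?_⟩
    rw [swapIdx_length] at hlt
    rw [swapIdx_getD t m n l hm' hn' hd]
    by_cases h1 : l = n - 1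
    · have := hb (m-1) (by omega)
      rw [swapIdx_getD i m n (m-1) him hin hd] at this
      simpa [h1, hd, hd2] using this
    · by_cases h2 : l = m - 1
      · have := hb (n-1) (by omega)
        rw [swapIdx_getD i m n (n-1) him hin hd] at this
        simpa [h1, h2, hd, hd2] using this
      · have := hb l hlt
        rw [swapIdx_getD i m n l him hin hd] at this
        simpa [h1, h2, hd, hd2] using this

end swap

lemma map_eraseIdx' (f : ℕ → ℕ) (l : List ℕ) (k : ℕ) :
    (l.eraseIdx k).map f = (l.map f).eraseIdx k := by
  induction l generalizing k with
  | nil => simp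
  | cons a l ih => cases k <;> simp [ih]

section del
variable {t i : List ℕ} {m n v : ℕ}

lemma delete2_length (hm : 1 ≤ m) (hmn : m < n) (hn : n ≤ t.length) :
    (delete2 t m n).length = t.length - 2 := by
  have h1 : (t.eraseIdx (n-1)).length = t.length - 1 := by
    rw [List.length_eraseIdx, if_pos (by omega)]
  unfold delete2
  rw [List.length_eraseIdx, h1, if_pos (by omega)]
  omega

lemma delete2_getD (j : ℕ) (hm : 1 ≤ m) (hmn : m < n) (hn : n ≤ t.length) :
    (delete2 t m n).getD j 0 =
      if j < m - 1 then t.getD j 0 else if j < n - 2 then t.getD (j+1) 0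
      else t.getD (j+2) 0 := by
  unfold delete2
  rw [getD_eraseIdx' _ _ _ (by rw [List.length_eraseIdx, if_pos (by omega)]; omega)]
  by_cases h1 : j < m - 1
  · rw [if_pos h1, if_pos h1, getD_eraseIdx' _ _ _ (by omega), if_pos (by omega)]
  · rw [if_neg h1, if_neg h1, getD_eraseIdx' _ _ _ (by omega)]
    by_cases h2 : j < n - 2
    · rw [if_pos (by omega), if_pos h2]
    · rw [if_neg (by omega), if_neg h2]

lemma padT_delete2 (M : ℕ) : padT M (delete2 t m n) = delete2 (padT M t) m n := by
  simp [padT, delete2, map_eraseIdx']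

lemma insert2_length (hm : 1 ≤ m) (hmn : m < n) (hni : n - 2 ≤ i.length) :
    (insert2 i m n v).length = i.length + 2 := by
  have h1 : (i.insertIdx (m-1) v).length = i.length + 1 := List.length_insertIdx_of_le_length (by omega) _
  unfold insert2
  rw [List.length_insertIdx_of_le_length (show n - 1 ≤ (i.insertIdx (m-1) v).length by omega)]
  omega

lemma insert2_getD (j : ℕ) (hm : 1 ≤ m) (hmn : m < n) (hni : n - 2 ≤ i.length) :
    (insert2 i m n v).getD j 0 =
      if j < m - 1 then i.getD j 0 else if j = m - 1 then v
      else if j < n - 1 then i.getD (j-1) 0 else if j = n - 1 then v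
      else i.getD (j-2) 0 := by
  unfold insert2
  rw [getD_insertIdx' _ _ _ _ (by rw [List.length_insertIdx_of_le_length (show m - 1 ≤ i.length by omega)]; omega)]
  by_cases h1 : j < n - 1
  · simp only [if_pos h1]
    rw [getD_insertIdx' _ _ _ _ (by omega)]
  · simp only [if_neg h1, if_neg (show ¬ j < m - 1 by omega), if_neg (show ¬ j = m - 1 by omega)]
    by_cases h2 : j = n - 1
    · simp only [if_pos h2]
    · simp only [if_neg h2]
      rw [getD_insertIdx' _ _ _ _ (by omega),
        if_neg (show ¬ j - 1 < m - 1 by omega), if_neg (show ¬ j - 1 = m - 1 by omega),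
        Nat.sub_sub]

lemma IdxLe_insert2 (hm : 1 ≤ m) (hmn : m < n) (hn : n ≤ t.length)
    (hlen : i.length = t.length - 2) :
    IdxLe (insert2 i m n v) t ↔
      IdxLe i (delete2 t m n) ∧ 1 ≤ v ∧ v ≤ t.getD (m-1) 0 ∧ v ≤ t.getD (n-1) 0 := by
  have hni : n - 2 ≤ i.length := by omega
  have hilen : (insert2 i m n v).length = t.length := by rw [insert2_length hm hmn hni]; omega
  constructor
  · rintro ⟨-, hb⟩
    have hv1 := hb (m-1) (by omega)
    rw [insert2_getD (m-1) hm hmn hni, if_neg (by omega), if_pos rfl] at hv1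
    have hv2 := hb (n-1) (by omega)
    rw [insert2_getD (n-1) hm hmn hni, if_neg (by omega), if_neg (by omega),
      if_neg (by omega), if_pos rfl] at hv2
    refine ⟨⟨by rw [delete2_length hm hmn hn]; omega, fun j hj => ?_⟩, hv1.1, hv1.2, hv2.2⟩
    rw [delete2_length hm hmn hn] at hj
    rw [delete2_getD j hm hmn hn]
    by_cases h1 : j < m - 1
    · have := hb j (by omega)
      rw [insert2_getD j hm hmn hni, if_pos h1] at this
      rw [if_pos h1]; exact this
    · by_cases h2 : j < n - 2
      · have := hb (j+1) (by omega)
        rw [insert2_getD (j+1) hm hmn hni, if_neg (by omega), if_neg (by omega),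
          if_pos (by omega)] at this
        rw [if_neg h1, if_pos h2]
        simpa using this
      · have := hb (j+2) (by omega)
        rw [insert2_getD (j+2) hm hmn hni, if_neg (by omega), if_neg (by omega),
          if_neg (by omega), if_neg (by omega)] at this
        rw [if_neg h1, if_neg h2]
        simpa using this
  · rintro ⟨⟨-, hb⟩, hv1, hv2, hv3⟩
    rw [delete2_length hm hmn hn] at hb
    refine ⟨hilen, fun l hl => ?_⟩
    rw [insert2_getD l hm hmn hni]
    by_cases h1 : l < m - 1
    · rw [if_pos h1]
      have := hb l (by omega)
      rw [delete2_getD l hm hmn hn, if_pos h1] at this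
      exact this
    · rw [if_neg h1]
      by_cases h2 : l = m - 1
      · rw [if_pos h2, h2]; exact ⟨hv1, hv2⟩
      · rw [if_neg h2]
        by_cases h3 : l < n - 1
        · rw [if_pos h3]
          have := hb (l-1) (by omega)
          rw [delete2_getD (l-1) hm hmn hn, if_neg (by omega), if_pos (by omega)] at this
          rw [show l - 1 + 1 = l by omega] at this
          exact this
        · rw [if_neg h3]
          by_cases h4 : l = n - 1
          · rw [if_pos h4, h4]; exact ⟨hv1, hv3⟩
          · rw [if_neg h4]
            have := hb (l-2) (by omega)
            rw [delete2_getD (l-2) hm hmn hn, if_neg (by omega), if_neg (by omega)] at this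
            rw [show l - 2 + 2 = l by omega] at this
            exact this

end del

lemma getD_take' (i : List ℕ) (k j : ℕ) (h : j < k) : (i.take k).getD j 0 = i.getD j 0 := by
  by_cases hj : j < i.length
  · rw [List.getD_eq_getElem _ _ (by simp; omega), List.getD_eq_getElem _ _ hj,
      List.getElem_take]
  · rw [List.getD_eq_default _ _ (by simp; omega), List.getD_eq_default _ _ (by omega)]

lemma getD_drop' (i : List ℕ) (k j : ℕ) : (i.drop k).getD j 0 = i.getD (k + j) 0 := by
  by_cases hj : k + j < i.length
  · rw [List.getD_eq_getElem _ _ (by simp; omega), List.getD_eq_getElem _ _ hj,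
      List.getElem_drop]
  · rw [List.getD_eq_default _ _ (by simp; omega), List.getD_eq_default _ _ (by omega)]

lemma IdxLe_append {i : Index} {t₀ t₁ : Ty} :
    IdxLe i (t₀ ++ t₁) ↔
      IdxLe (i.take t₀.length) t₀ ∧ IdxLe (i.drop t₀.length) t₁ ∧
        i.length = t₀.length + t₁.length := by
  constructor
  · rintro ⟨hl, hb⟩
    rw [List.length_append] at hl
    refine ⟨⟨by simp; omega, fun l hlt => ?_⟩, ⟨by simp; omega, fun l hlt => ?_⟩, hl⟩
    · rw [getD_take' _ _ _ hlt]
      have := hb l (by simp; omega)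
      rwa [List.getD_append _ _ _ _ hlt] at this
    · rw [getD_drop']
      have := hb (t₀.length + l) (by simp; omega)
      rwa [List.getD_append_right _ _ _ _ (by omega), Nat.add_sub_cancel_left] at this
  · rintro ⟨⟨-, hb₀⟩, ⟨-, hb₁⟩, hl⟩
    refine ⟨by simp; omega, fun l hlt => ?_⟩
    rw [List.length_append] at hlt
    by_cases h : l < t₀.length
    · rw [List.getD_append _ _ _ _ h]
      have := hb₀ l h
      rwa [getD_take' _ _ _ h] at this
    · rw [List.getD_append_right _ _ _ _ (by omega)]
      have := hb₁ (l - t₀.length) (by omega)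
      rwa [getD_drop', show t₀.length + (l - t₀.length) = l by omega] at this

/-! ### Agreement of indices -/

def Agr (t : Ty) (i i' : Index) : Prop :=
  i'.length = i.length ∧ ∀ l, l < t.length → i.getD l 0 ≤ t.getD l 0 → i'.getD l 0 = i.getD l 0

lemma Agr_refl (t : Ty) (i : Index) : Agr t i i := ⟨rfl, fun _ _ _ => rfl⟩

lemma Agr_eq_of_IdxLe {t : Ty} {i i' : Index} (hle : IdxLe i t) (h : Agr t i i') : i' = i := by
  obtain ⟨hl, hb⟩ := hle
  obtain ⟨hl', hb'⟩ := h
  refine List.ext_getElem (by omega) (fun l h1 h2 => ?_)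
  have := hb' l (by omega) (hb l (by omega)).2
  rwa [List.getD_eq_getElem _ _ h1, List.getD_eq_getElem _ _ h2] at this

lemma Agr_take {t₀ t₁ : Ty} {i i' : Index} (h : Agr (t₀ ++ t₁) i i')
    (hl : i.length = t₀.length + t₁.length) :
    Agr t₀ (i.take t₀.length) (i'.take t₀.length) := by
  obtain ⟨hl', hb⟩ := h
  refine ⟨by simp; omega, fun l hlt hle => ?_⟩
  rw [getD_take' _ _ _ hlt] at hle ⊢
  rw [getD_take' _ _ _ hlt]
  exact hb l (by simp; omega) (by rwa [List.getD_append _ _ _ _ hlt])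

lemma Agr_drop {t₀ t₁ : Ty} {i i' : Index} (h : Agr (t₀ ++ t₁) i i')
    (hl : i.length = t₀.length + t₁.length) :
    Agr t₁ (i.drop t₀.length) (i'.drop t₀.length) := by
  obtain ⟨hl', hb⟩ := h
  refine ⟨by simp; omega, fun l hlt hle => ?_⟩
  rw [getD_drop'] at hle ⊢
  rw [getD_drop']
  refine hb (t₀.length + l) (by simp; omega) ?_
  rwa [List.getD_append_right _ _ _ _ (by omega), Nat.add_sub_cancel_left]

lemma Agr_swapIdx {t i i' : List ℕ} {m n : ℕ} (hm : 1 ≤ m) (hmn : m < n) (hn : n ≤ t.length)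
    (hlen : i.length = t.length) (h : Agr (swapIdx t m n) i i') :
    Agr t (swapIdx i m n) (swapIdx i' m n) := by
  obtain ⟨hl', hb⟩ := h
  have hm' : m - 1 < t.length := by omega
  have hn' : n - 1 < t.length := by omega
  have him : m - 1 < i.length := by omega
  have hin : n - 1 < i.length := by omega
  have him' : m - 1 < i'.length := by omega
  have hin' : n - 1 < i'.length := by omega
  have hd : m - 1 ≠ n - 1 := by omega
  refine ⟨by simp [swapIdx_length]; omega, fun l hlt hle => ?_⟩
  rw [swapIdx_getD i m n l him hin hd] at hle ⊢
  rw [swapIdx_getD i' m n l him' hin' hd]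
  by_cases h1 : l = n - 1
  · simp only [if_pos h1] at hle ⊢
    refine hb (m-1) (by rw [swapIdx_length]; omega) ?_
    rw [swapIdx_getD t m n (m-1) hm' hn' hd, if_neg hd, if_pos rfl]
    simpa [h1] using hle
  · simp only [if_neg h1] at hle ⊢
    by_cases h2 : l = m - 1
    · simp only [if_pos h2] at hle ⊢
      refine hb (n-1) (by rw [swapIdx_length]; omega) ?_
      rw [swapIdx_getD t m n (n-1) hm' hn' hd, if_pos rfl]
      simpa [h2] using hle
    · simp only [if_neg h2] at hle ⊢
      refine hb l (by rw [swapIdx_length]; omega) ?_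
      rw [swapIdx_getD t m n l hm' hn' hd, if_neg h1, if_neg h2]
      exact hle

lemma Agr_insert2 {t i i' : List ℕ} {m n v w : ℕ} (hm : 1 ≤ m) (hmn : m < n)
    (hn : n ≤ t.length) (hlen : i.length = t.length - 2)
    (h : Agr (delete2 t m n) i i')
    (hcond : (v ≤ t.getD (m-1) 0 ∨ v ≤ t.getD (n-1) 0) → w = v) :
    Agr t (insert2 i m n v) (insert2 i' m n w) := by
  obtain ⟨hl', hb⟩ := h
  rw [delete2_length hm hmn hn] at hb
  have hni : n - 2 ≤ i.length := by omega
  have hni' : n - 2 ≤ i'.length := by omega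
  refine ⟨by rw [insert2_length hm hmn hni, insert2_length hm hmn hni']; omega,
    fun l hlt hle => ?_⟩
  rw [insert2_getD l hm hmn hni] at hle ⊢
  rw [insert2_getD l hm hmn hni']
  by_cases h1 : l < m - 1
  · simp only [if_pos h1] at hle ⊢
    refine hb l (by omega) ?_
    rwa [delete2_getD l hm hmn hn, if_pos h1]
  · simp only [if_neg h1] at hle ⊢
    by_cases h2 : l = m - 1
    · simp only [if_pos h2] at hle ⊢
      exact hcond (Or.inl (by rwa [← h2]))
    · simp only [if_neg h2] at hle ⊢
      by_cases h3 : l < n - 1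
      · simp only [if_pos h3] at hle ⊢
        refine hb (l-1) (by omega) ?_
        rw [delete2_getD (l-1) hm hmn hn, if_neg (by omega), if_pos (by omega),
          show l - 1 + 1 = l by omega]
        exact hle
      · simp only [if_neg h3] at hle ⊢
        by_cases h4 : l = n - 1
        · simp only [if_pos h4] at hle ⊢
          exact hcond (Or.inr (by rwa [← h4]))
        · simp only [if_neg h4] at hle ⊢
          refine hb (l-2) (by omega) ?_
          rw [delete2_getD (l-2) hm hmn hn, if_neg (by omega), if_neg (by omega),
            show l - 2 + 2 = l by omega]
          exact hle

/-! ### fold / mapM helpers -/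

section wlemmas
variable {V : Type} [Field V] [DecidableEq V]

lemma wadd_some_zero (s : W V) : wadd s (some 0) = s := by
  cases s <;> simp [wadd]

lemma wadd_none (s : W V) : wadd s none = none := by
  cases s <;> simp [wadd]

lemma foldl_wadd_zeros {ys : List (W V)} (h : ∀ y ∈ ys, y = some 0) (s : W V) :
    ys.foldl wadd s = s := by
  induction ys generalizing s with
  | nil => rfl
  | cons a l ih =>
      rw [List.foldl_cons, h a (.head _), wadd_some_zero]
      exact ih (fun y hy => h y (.tail _ hy)) s

lemma foldl_wadd_acc_none (ys : List (W V)) : ys.foldl wadd none = none := by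
  induction ys with
  | nil => rfl
  | cons a l ih => rw [List.foldl_cons]; cases a <;> simp [wadd, ih]

lemma foldl_wadd_mem_none {ys : List (W V)} (h : (none : W V) ∈ ys) (s : W V) :
    ys.foldl wadd s = none := by
  induction ys generalizing s with
  | nil => simp at h
  | cons a l ih =>
      rw [List.foldl_cons]
      rcases List.mem_cons.1 h with rfl | h'
      · rw [wadd_none, foldl_wadd_acc_none]
      · exact ih h' _

end wlemmas

lemma mapM_isSome {α β : Type} (f : α → Option β) (l : List α)
    (h : ∀ x ∈ l, ∃ y, f x = some y) : ∃ ys, l.mapM f = some ys := by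
  induction l with
  | nil => exact ⟨[], rfl⟩
  | cons a l ih =>
      obtain ⟨y, hy⟩ := h a (.head _)
      obtain ⟨ys, hys⟩ := ih (fun x hx => h x (.tail _ hx))
      exact ⟨y :: ys, by rw [List.mapM_cons, hy, hys]; rfl⟩

lemma mapM_eq_map {α β : Type} (f : α → Option β) (g : α → β) (l : List α)
    (h : ∀ x ∈ l, f x = some (g x)) : l.mapM f = some (l.map g) := by
  induction l with
  | nil => rfl
  | cons a l ih =>
      rw [List.mapM_cons, h a (.head _), ih (fun x hx => h x (.tail _ hx))]
      rfl

/-! ### inference lemmas -/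

lemma inferTy_of_hasTy {Γ : Ctx} {e : Expr} {t : Ty} (h : HasTy Γ e t) :
    inferTy Γ e = some t := by
  induction h with
  | var h => simpa [inferTy]
  | paren _ ih => simpa [inferTy]
  | prod h₀ h₁ ih₀ ih₁ => simp [inferTy, ih₀, ih₁]
  | trans h hm hmn hn ih => simp [inferTy, ih, hm, hmn, hn]
  | contr h hm hmn hn heq ih =>
      simp only [inferTy, ih, Option.bind_eq_bind, Option.bind_some]
      rw [if_pos ⟨hm, hmn, hn, heq⟩]
      rfl
  | elem h₀ h₁ ih₀ ih₁ => simp [inferTy, ih₀, ih₁]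
  | @smul e₀ e₁ t' h₀ h₁ ih₀ ih₁ =>
      simp only [inferTy, ih₀, ih₁, Option.bind_eq_bind, Option.bind_some]
      by_cases ht : t' = []
      · simp [ht]
      · simp [Ne.symm ht, ht]
  | @sdiv e₀ e₁ t' h₀ h₁ ih₀ ih₁ =>
      simp only [inferTy, ih₀, ih₁, Option.bind_eq_bind, Option.bind_some]
      by_cases ht : t' = []
      · simp [ht]
      · simp [ht]

lemma inferTy_pad (M : ℕ) {Γ : Ctx} {e : Expr} {t : Ty} (h : HasTy Γ e t) :
    inferTy (padCtx M Γ) e = some (padT M t) := by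
  induction h with
  | var h => simp [inferTy, padCtx, h]
  | paren _ ih => simpa [inferTy]
  | prod h₀ h₁ ih₀ ih₁ => simp [inferTy, ih₀, ih₁, padT_append]
  | @trans e t' m n h hm hmn hn ih =>
      have hc : 1 ≤ m ∧ m < n ∧ n ≤ (padT M t').length := by rw [padT_length]; exact ⟨hm, hmn, hn⟩
      simp [inferTy, ih, hc, padT_swapIdx M t' m n (by omega) (by omega)]
  | @contr e t' m n h hm hmn hn heq ih =>
      have hc : 1 ≤ m ∧ m < n ∧ n ≤ (padT M t').length ∧
          (padT M t').getD (m-1) 0 = (padT M t').getD (n-1) 0 := by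
        rw [padT_length, padT_getD, padT_getD, heq]
        exact ⟨hm, hmn, hn, rfl⟩
      simp only [inferTy, ih, Option.bind_eq_bind, Option.bind_some]
      rw [if_pos hc, padT_delete2]
      rfl
  | elem h₀ h₁ ih₀ ih₁ => simp [inferTy, ih₀, ih₁]
  | @smul e₀ e₁ t' h₀ h₁ ih₀ ih₁ =>
      simp only [inferTy, ih₀, ih₁, Option.bind_some, padT_nil]
      by_cases ht : padT M t' = []
      · simp [ht]
      · simp [Ne.symm ht, ht]
  | @sdiv e₀ e₁ t' h₀ h₁ ih₀ ih₁ =>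
      simp only [inferTy, ih₀, ih₁, Option.bind_some, padT_nil]
      by_cases ht : padT M t' = []
      · simp [ht]
      · simp [ht]

lemma wmul_none_left {V : Type} [Mul V] (w : W V) : wmul none w = none := by
  cases w <;> rfl

lemma wmul_none_right {V : Type} [Mul V] (w : W V) : wmul w none = none := by
  cases w <;> rfl

lemma applyOp_none_left {V : Type} [Field V] [DecidableEq V] (op : Op) (w : W V) :
    applyOp op none w = none := by
  cases op <;> cases w <;> rfl

lemma IdxLe_nil_nil : IdxLe ([] : Index) [] := ⟨rfl, fun l hl => by simp at hl⟩

theorem eval_master (V : Type) [Field V] [DecidableEq V] (M : ℕ) (hM : 1 ≤ M)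
    (Γ : Ctx) (μ₁ μ₂ : Store V)
    (h1 : ∀ x t, Γ x = some t → ∀ i, IdxLe i t → μ₁ (x, i) ≠ none)
    (h2 : ∀ x t, Γ x = some t → ∀ i, IdxLe i (padT M t) → μ₂ (x, i) ≠ none)
    (heq : ∀ x t, Γ x = some t → ∀ i, IdxLe i t → μ₂ (x, i) = μ₁ (x, i))
    (hz : ∀ x t, Γ x = some t → ∀ i, PadReg M t i → μ₂ (x, i) = some (some 0))
    {e : Expr} {t : Ty} (h : HasTy Γ e t) :
    (∀ i, IdxLe i t → ∃ w, eval Γ μ₁ e i = some w) ∧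
    (∀ i, IdxLe i t → eval Γ μ₁ e i = eval (padCtx M Γ) μ₂ e i) ∧
    (∀ i, PadReg M t i → eval (padCtx M Γ) μ₂ e i = some (some 0) ∨
      (eval (padCtx M Γ) μ₂ e i = some none ∧
        ∀ i', IdxLe i' t → Agr t i i' → eval Γ μ₁ e i' = some none)) := by
  induction h with
  | @var x t hx =>
      refine ⟨fun i hi => ?_, fun i hi => ?_, fun i hi => ?_⟩
      · exact Option.ne_none_iff_exists'.1 (h1 x t hx i hi)
      · exact (heq x t hx i hi).symm
      · exact Or.inl (hz x t hx i hi)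
  | paren h ih =>
      obtain ⟨ihc, iha, ihb⟩ := ih
      exact ⟨fun i hi => ihc i hi, fun i hi => iha i hi, fun i hi => ihb i hi⟩
  | @prod e₀ e₁ t₀ t₁ h₀ h₁ ih₀ ih₁ =>
      obtain ⟨ihc₀, iha₀, ihb₀⟩ := ih₀
      obtain ⟨ihc₁, iha₁, ihb₁⟩ := ih₁
      have it₀ := inferTy_of_hasTy h₀
      have ip₀ := inferTy_pad M h₀
      have ev1 : ∀ j, eval Γ μ₁ (.prod e₀ e₁) j =
          (eval Γ μ₁ e₀ (j.take t₀.length)).bind fun v₀ =>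
            (eval Γ μ₁ e₁ (j.drop t₀.length)).bind fun v₁ => some (wmul v₀ v₁) := by
        intro j
        simp [eval, it₀]
      have ev2 : ∀ j, eval (padCtx M Γ) μ₂ (.prod e₀ e₁) j =
          (eval (padCtx M Γ) μ₂ e₀ (j.take t₀.length)).bind fun v₀ =>
            (eval (padCtx M Γ) μ₂ e₁ (j.drop t₀.length)).bind fun v₁ => some (wmul v₀ v₁) := by
        intro j
        simp [eval, ip₀, padT_length]
      refine ⟨fun i hi => ?_, fun i hi => ?_, fun i hi => ?_⟩
      · obtain ⟨hi₀, hi₁, -⟩ := IdxLe_append.1 hi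
        obtain ⟨w₀, hw₀⟩ := ihc₀ _ hi₀
        obtain ⟨w₁, hw₁⟩ := ihc₁ _ hi₁
        exact ⟨wmul w₀ w₁, by rw [ev1, hw₀, hw₁]; rfl⟩
      · obtain ⟨hi₀, hi₁, -⟩ := IdxLe_append.1 hi
        rw [ev1, ev2, iha₀ _ hi₀, iha₁ _ hi₁]
      · obtain ⟨hni, hpi⟩ := hi
        rw [padT_append] at hpi
        have hsplit := IdxLe_append.1 hpi
        rw [padT_length, padT_length] at hsplit
        obtain ⟨hp₀, hp₁, hlen⟩ := hsplit
        set i₀ := i.take t₀.length with hi₀def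
        set i₁ := i.drop t₀.length with hi₁def
        by_cases hv₀ : IdxLe i₀ t₀
        · by_cases hv₁ : IdxLe i₁ t₁
          · exact absurd (IdxLe_append.2 ⟨hv₀, hv₁, hlen⟩) hni
          · -- first factor valid, second in padding
            obtain ⟨w₀, hw₀⟩ := ihc₀ _ hv₀
            have hw₀p : eval (padCtx M Γ) μ₂ e₀ i₀ = some w₀ := by rw [← iha₀ _ hv₀]; exact hw₀
            rcases ihb₁ i₁ ⟨hv₁, hp₁⟩ with hz₁ | ⟨hn₁, hlink₁⟩
            · cases w₀ with
              | none =>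
                  refine Or.inr ⟨by rw [ev2, hw₀p, hz₁]; rfl, fun i' hi' hagr => ?_⟩
                  obtain ⟨hi'₀, hi'₁, -⟩ := IdxLe_append.1 hi'
                  have hteq : i'.take t₀.length = i₀ := Agr_eq_of_IdxLe hv₀ (Agr_take hagr hlen)
                  obtain ⟨w₁', hw₁'⟩ := ihc₁ _ hi'₁
                  rw [ev1, hteq, hw₀, hw₁']
                  simp [wmul_none_left]
              | some a =>
                  refine Or.inl ?_
                  rw [ev2, hw₀p, hz₁]
                  simp [wmul]
            · refine Or.inr ⟨?_, fun i' hi' hagr => ?_⟩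
              · rw [ev2, hw₀p, hn₁]
                simp [wmul_none_right]
              · obtain ⟨hi'₀, hi'₁, -⟩ := IdxLe_append.1 hi'
                have he₁ : eval Γ μ₁ e₁ (i'.drop t₀.length) = some none :=
                  hlink₁ _ hi'₁ (Agr_drop hagr hlen)
                obtain ⟨w₀', hw₀'⟩ := ihc₀ _ hi'₀
                rw [ev1, hw₀', he₁]
                simp [wmul_none_right]
        · rcases ihb₀ i₀ ⟨hv₀, hp₀⟩ with hz₀ | ⟨hn₀, hlink₀⟩
          · -- v₀ = some 0
            by_cases hv₁ : IdxLe i₁ t₁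
            · obtain ⟨w₁, hw₁⟩ := ihc₁ _ hv₁
              have hw₁p : eval (padCtx M Γ) μ₂ e₁ i₁ = some w₁ := by rw [← iha₁ _ hv₁]; exact hw₁
              cases w₁ with
              | none =>
                  refine Or.inr ⟨by rw [ev2, hz₀, hw₁p]; simp [wmul_none_right],
                    fun i' hi' hagr => ?_⟩
                  obtain ⟨hi'₀, hi'₁, -⟩ := IdxLe_append.1 hi'
                  have hteq : i'.drop t₀.length = i₁ := Agr_eq_of_IdxLe hv₁ (Agr_drop hagr hlen)
                  obtain ⟨w₀', hw₀'⟩ := ihc₀ _ hi'₀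
                  rw [ev1, hteq, hw₀', hw₁]
                  simp [wmul_none_right]
              | some b =>
                  refine Or.inl ?_
                  rw [ev2, hz₀, hw₁p]
                  simp [wmul]
            · rcases ihb₁ i₁ ⟨hv₁, hp₁⟩ with hz₁ | ⟨hn₁, hlink₁⟩
              · refine Or.inl ?_
                rw [ev2, hz₀, hz₁]
                simp [wmul]
              · refine Or.inr ⟨by rw [ev2, hz₀, hn₁]; simp [wmul_none_right],
                  fun i' hi' hagr => ?_⟩
                obtain ⟨hi'₀, hi'₁, -⟩ := IdxLe_append.1 hi'
                have he₁ : eval Γ μ₁ e₁ (i'.drop t₀.length) = some none :=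
                  hlink₁ _ hi'₁ (Agr_drop hagr hlen)
                obtain ⟨w₀', hw₀'⟩ := ihc₀ _ hi'₀
                rw [ev1, hw₀', he₁]
                simp [wmul_none_right]
          · -- v₀ = • with link
            have hw₁p : ∃ w, eval (padCtx M Γ) μ₂ e₁ i₁ = some w := by
              by_cases hv₁ : IdxLe i₁ t₁
              · obtain ⟨w₁, hw₁⟩ := ihc₁ _ hv₁
                exact ⟨w₁, by rw [← iha₁ _ hv₁]; exact hw₁⟩
              · rcases ihb₁ i₁ ⟨hv₁, hp₁⟩ with hz₁ | ⟨hn₁, -⟩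
                · exact ⟨some 0, hz₁⟩
                · exact ⟨none, hn₁⟩
            obtain ⟨w₁p, hw₁p⟩ := hw₁p
            refine Or.inr ⟨by rw [ev2, hn₀, hw₁p]; simp [wmul_none_left],
              fun i' hi' hagr => ?_⟩
            obtain ⟨hi'₀, hi'₁, -⟩ := IdxLe_append.1 hi'
            have he₀ : eval Γ μ₁ e₀ (i'.take t₀.length) = some none :=
              hlink₀ _ hi'₀ (Agr_take hagr hlen)
            obtain ⟨w₁', hw₁'⟩ := ihc₁ _ hi'₁
            rw [ev1, he₀, hw₁']
            simp [wmul_none_left]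
  | @trans e t m n h hm hmn hn ih =>
      obtain ⟨ihc, iha, ihb⟩ := ih
      have hsl : (swapIdx t m n).length = t.length := swapIdx_length t m n
      refine ⟨fun i hi => ?_, fun i hi => ?_, fun i hi => ?_⟩
      · have hlen : i.length = t.length := by rw [hi.1, hsl]
        exact ihc _ ((IdxLe_swapIdx hm hmn hn hlen).1 hi)
      · have hlen : i.length = t.length := by rw [hi.1, hsl]
        exact iha _ ((IdxLe_swapIdx hm hmn hn hlen).1 hi)
      · obtain ⟨hni, hpi⟩ := hi
        rw [padT_swapIdx M t m n (by omega) (by omega)] at hpi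
        have hlen : i.length = (padT M t).length := by
          rw [hpi.1, swapIdx_length]
        have hlen' : i.length = t.length := by rw [hlen, padT_length]
        have hswp : IdxLe (swapIdx i m n) (padT M t) :=
          (IdxLe_swapIdx hm hmn (by rw [padT_length]; exact hn) hlen).1 hpi
        have hswn : ¬ IdxLe (swapIdx i m n) t := by
          intro hc
          exact hni ((IdxLe_swapIdx hm hmn hn hlen').2 hc)
        rcases ihb (swapIdx i m n) ⟨hswn, hswp⟩ with h0 | ⟨hn0, hlink⟩
        · exact Or.inl h0
        · refine Or.inr ⟨hn0, fun i' hi' hagr => ?_⟩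
          have hlen'' : i'.length = t.length := by rw [hi'.1, hsl]
          exact hlink (swapIdx i' m n) ((IdxLe_swapIdx hm hmn hn hlen'').1 hi')
            (Agr_swapIdx hm hmn hn hlen' hagr)
  | @contr e t m n h hm hmn hn hteq ih =>
      obtain ⟨ihc, iha, ihb⟩ := ih
      have it := inferTy_of_hasTy h
      have ip := inferTy_pad M h
      have hnpad : n ≤ (padT M t).length := by rw [padT_length]; exact hn
      have ev1 : ∀ (j : Index), eval Γ μ₁ (.contr e m n) j =
          ((List.range (t.getD (m-1) 0)).mapM
            (fun l => eval Γ μ₁ e (insert2 j m n (l+1)))).bind fun vs =>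
              some (vs.foldl wadd (some 0)) := by
        intro j
        simp only [eval, it, Option.bind_eq_bind, Option.bind_some, Option.pure_def]
      have ev2 : ∀ (j : Index), eval (padCtx M Γ) μ₂ (.contr e m n) j =
          ((List.range (roundUp M (t.getD (m-1) 0))).mapM
            (fun l => eval (padCtx M Γ) μ₂ e (insert2 j m n (l+1)))).bind fun vs =>
              some (vs.foldl wadd (some 0)) := by
        intro j
        simp only [eval, ip, Option.bind_eq_bind, Option.bind_some, Option.pure_def, padT_getD]
      set d := t.getD (m-1) 0 with hd
      set D := roundUp M d with hDdef
      have hdD : d ≤ D := roundUp_ge M d hM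
      have hD0 : d = 0 → D = 0 := fun h0 => by rw [hDdef, h0, roundUp_zero]
      -- validity transports
      have hvald : ∀ (j : Index), IdxLe j (delete2 t m n) → ∀ v, 1 ≤ v → v ≤ d →
          IdxLe (insert2 j m n v) t := by
        intro j hj v h1v h2v
        refine (IdxLe_insert2 hm hmn hn (by rw [hj.1, delete2_length hm hmn hn])).2
          ⟨hj, h1v, h2v, by rwa [← hteq]⟩
      have hvalD : ∀ (j : Index), IdxLe j (delete2 (padT M t) m n) → ∀ v, 1 ≤ v → v ≤ D →
          IdxLe (insert2 j m n v) (padT M t) := by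
        intro j hj v h1v h2v
        refine (IdxLe_insert2 hm hmn hnpad
          (by rw [hj.1, delete2_length hm hmn hnpad])).2 ⟨hj, h1v, ?_, ?_⟩
        · rwa [padT_getD]
        · rw [padT_getD, ← hteq]
          exact h2v
      have hnotval : ∀ (j : Index) (v : ℕ), IdxLe j (delete2 t m n) → d < v →
          ¬ IdxLe (insert2 j m n v) t := by
        intro j v hj hv hcon
        have := ((IdxLe_insert2 hm hmn hn (by rw [hj.1, delete2_length hm hmn hn])).1 hcon).2.2.1
        omega
      refine ⟨fun i hi => ?_, fun i hi => ?_, fun i hi => ?_⟩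
      · -- (c) definedness
        obtain ⟨ys, hys⟩ := mapM_isSome (fun l => eval Γ μ₁ e (insert2 i m n (l+1)))
          (List.range d) (fun l hl => ihc _ (hvald i hi (l+1) (by omega)
            (by simpa using List.mem_range.1 hl)))
        exact ⟨ys.foldl wadd (some 0), by rw [ev1, hys]; rfl⟩
      · -- (a) agreement on valid indices
        set u : ℕ → W V := fun l => (eval Γ μ₁ e (insert2 i m n (l+1))).getD none with hu_def
        have hu : ∀ l < d, eval Γ μ₁ e (insert2 i m n (l+1)) = some (u l) := by
          intro l hl
          obtain ⟨w, hw⟩ := ihc _ (hvald i hi (l+1) (by omega) (by omega))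
          rw [hw, hu_def]
          simp [hw]
        have hu2 : ∀ l < d, eval (padCtx M Γ) μ₂ e (insert2 i m n (l+1)) = some (u l) := by
          intro l hl
          rw [← iha _ (hvald i hi (l+1) (by omega) (by omega))]
          exact hu l hl
        have hipad : IdxLe i (delete2 (padT M t) m n) := by
          rw [← padT_delete2]
          exact IdxLe_pad M hM hi
        have hext : ∀ l, d ≤ l → l < D → PadReg M t (insert2 i m n (l+1)) := by
          intro l h1l h2l
          exact ⟨hnotval i (l+1) hi (by omega), hvalD i hipad (l+1) (by omega) (by omega)⟩
        classical
        set u₂ : ℕ → W V := fun l => if l < d then u l else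
          (if eval (padCtx M Γ) μ₂ e (insert2 i m n (l+1)) = some (some 0) then some 0 else none)
          with hu₂_def
        have hu₂ : ∀ l ∈ List.range D,
            eval (padCtx M Γ) μ₂ e (insert2 i m n (l+1)) = some (u₂ l) := by
          intro l hl
          have hlD := List.mem_range.1 hl
          by_cases hld : l < d
          · rw [hu2 l hld, hu₂_def]
            simp [hld]
          · rcases ihb _ (hext l (by omega) hlD) with h0 | ⟨hn0, -⟩
            · rw [h0, hu₂_def]
              simp [hld, h0]
            · rw [hn0, hu₂_def]
              have : eval (padCtx M Γ) μ₂ e (insert2 i m n (l+1)) ≠ some (some 0) := by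
                rw [hn0]; simp
              simp [hld, this]
        have hm1 : (List.range d).mapM (fun l => eval Γ μ₁ e (insert2 i m n (l+1)))
            = some ((List.range d).map u) :=
          mapM_eq_map _ _ _ (fun l hl => hu l (List.mem_range.1 hl))
        have hm2 : (List.range D).mapM (fun l => eval (padCtx M Γ) μ₂ e (insert2 i m n (l+1)))
            = some ((List.range D).map u₂) := mapM_eq_map _ _ _ hu₂
        rw [ev1, ev2, hm1, hm2]
        simp only [Option.bind_some]
        by_cases hex : ∃ l, d ≤ l ∧ l < D ∧
            eval (padCtx M Γ) μ₂ e (insert2 i m n (l+1)) ≠ some (some 0)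
        · obtain ⟨l₀, hl₀d, hl₀D, hl₀ne⟩ := hex
          have hd1 : 1 ≤ d := by
            by_contra hcon
            have : D = 0 := hD0 (by omega)
            omega
          rcases ihb _ (hext l₀ hl₀d hl₀D) with h0 | ⟨hn0, hlink⟩
          · exact absurd h0 hl₀ne
          · have hj₁ : IdxLe (insert2 i m n 1) t := hvald i hi 1 le_rfl hd1
            have hagr : Agr t (insert2 i m n (l₀+1)) (insert2 i m n 1) := by
              refine Agr_insert2 hm hmn hn (by rw [hi.1, delete2_length hm hmn hn])
                (Agr_refl _ i) (fun hor => ?_)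
              rcases hor with h' | h' <;> omega
            have hf0 : eval Γ μ₁ e (insert2 i m n 1) = some none := hlink _ hj₁ hagr
            have hu0 : u 0 = none := by
              have := hu 0 hd1
              rw [show (0:ℕ)+1 = 1 from rfl, hf0] at this
              exact (Option.some.inj this).symm
            have hmem1 : (none : W V) ∈ (List.range d).map u :=
              List.mem_map.2 ⟨0, List.mem_range.2 (by omega), hu0⟩
            have hmem2 : (none : W V) ∈ (List.range D).map u₂ := by
              refine List.mem_map.2 ⟨l₀, List.mem_range.2 hl₀D, ?_⟩
              rw [hu₂_def]
              simp [show ¬ l₀ < d by omega, hl₀ne]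
            rw [foldl_wadd_mem_none hmem1, foldl_wadd_mem_none hmem2]
        · push_neg at hex
          congr 1
          conv_rhs => rw [show D = d + (D - d) by omega, List.range_add, List.map_append,
            List.foldl_append]
          have hfirst : (List.range d).map u₂ = (List.range d).map u :=
            List.map_congr_left (fun l hl => by
              rw [hu₂_def]; simp [List.mem_range.1 hl])
          rw [hfirst]
          refine (foldl_wadd_zeros (fun y hy => ?_) _).symm
          obtain ⟨a, ha, rfl⟩ := List.mem_map.1 hy
          obtain ⟨x, hx, rfl⟩ := List.mem_map.1 ha
          have hxr := List.mem_range.1 hx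
          have := hex (d + x) (by omega) (by omega)
          rw [hu₂_def]
          simp [show ¬ d + x < d by omega, this]
      · -- (b) zero or bottom on padding region
        obtain ⟨hni, hpi⟩ := hi
        rw [padT_delete2] at hpi
        have hlen : i.length = t.length - 2 := by
          rw [hpi.1, delete2_length hm hmn hnpad, padT_length]
        have hall : ∀ l, l < D → PadReg M t (insert2 i m n (l+1)) := by
          intro l hl
          refine ⟨fun hcon => ?_, hvalD i hpi (l+1) (by omega) (by omega)⟩
          exact hni ((IdxLe_insert2 hm hmn hn hlen).1 hcon).1
        classical
        set u₂ : ℕ → W V := fun l =>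
          (if eval (padCtx M Γ) μ₂ e (insert2 i m n (l+1)) = some (some 0) then some 0 else none)
          with hu₂_def
        have hu₂ : ∀ l ∈ List.range D,
            eval (padCtx M Γ) μ₂ e (insert2 i m n (l+1)) = some (u₂ l) := by
          intro l hl
          rcases ihb _ (hall l (List.mem_range.1 hl)) with h0 | ⟨hn0, -⟩
          · rw [h0, hu₂_def]
            simp [h0]
          · rw [hn0, hu₂_def]
            have : eval (padCtx M Γ) μ₂ e (insert2 i m n (l+1)) ≠ some (some 0) := by
              rw [hn0]; simp
            simp [this]
        have hm2 : (List.range D).mapM (fun l => eval (padCtx M Γ) μ₂ e (insert2 i m n (l+1)))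
            = some ((List.range D).map u₂) := mapM_eq_map _ _ _ hu₂
        by_cases hex : ∃ l, l < D ∧
            eval (padCtx M Γ) μ₂ e (insert2 i m n (l+1)) ≠ some (some 0)
        · obtain ⟨l₀, hl₀D, hl₀ne⟩ := hex
          rcases ihb _ (hall l₀ hl₀D) with h0 | ⟨hn0, hlink⟩
          · exact absurd h0 hl₀ne
          · have hd1 : 1 ≤ d := by
              by_contra hcon
              have : D = 0 := hD0 (by omega)
              omega
            refine Or.inr ⟨?_, fun i' hi' hagr => ?_⟩
            · rw [ev2, hm2]
              simp only [Option.bind_some]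
              have hmem : (none : W V) ∈ (List.range D).map u₂ := by
                refine List.mem_map.2 ⟨l₀, List.mem_range.2 hl₀D, ?_⟩
                rw [hu₂_def]
                simp [hl₀ne]
              rw [foldl_wadd_mem_none hmem]
            · -- unpadded evaluation at agreeing valid index is bottom
              set w : ℕ := if l₀ + 1 ≤ d then l₀ + 1 else 1 with hw_def
              have hw1 : 1 ≤ w := by rw [hw_def]; split_ifs <;> omega
              have hwd : w ≤ d := by rw [hw_def]; split_ifs <;> omega
              have hj' : IdxLe (insert2 i' m n w) t := hvald i' hi' w hw1 hwd
              have hagr2 : Agr t (insert2 i m n (l₀+1)) (insert2 i' m n w) := by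
                refine Agr_insert2 hm hmn hn hlen hagr (fun hor => ?_)
                have hld : l₀ + 1 ≤ d := by rcases hor with h' | h' <;> omega
                rw [hw_def, if_pos hld]
              have hfnone : eval Γ μ₁ e (insert2 i' m n w) = some none :=
                hlink _ hj' hagr2
              set u' : ℕ → W V := fun l => (eval Γ μ₁ e (insert2 i' m n (l+1))).getD none
                with hu'_def
              have hu' : ∀ l < d, eval Γ μ₁ e (insert2 i' m n (l+1)) = some (u' l) := by
                intro l hl
                obtain ⟨wv, hwv⟩ := ihc _ (hvald i' hi' (l+1) (by omega) (by omega))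
                rw [hwv, hu'_def]
                simp [hwv]
              have hm1' : (List.range d).mapM (fun l => eval Γ μ₁ e (insert2 i' m n (l+1)))
                  = some ((List.range d).map u') :=
                mapM_eq_map _ _ _ (fun l hl => hu' l (List.mem_range.1 hl))
              have hu'w : u' (w-1) = none := by
                have := hu' (w-1) (by omega)
                rw [show w - 1 + 1 = w by omega, hfnone] at this
                exact (Option.some.inj this).symm
              have hmem : (none : W V) ∈ (List.range d).map u' :=
                List.mem_map.2 ⟨w-1, List.mem_range.2 (by omega), hu'w⟩
              rw [ev1, hm1']
              simp only [Option.bind_some]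
              rw [foldl_wadd_mem_none hmem]
        · push_neg at hex
          refine Or.inl ?_
          rw [ev2, hm2]
          simp only [Option.bind_some]
          have hzeros : ∀ y ∈ (List.range D).map u₂, y = some (0:V) := by
            intro y hy
            obtain ⟨a, ha, rfl⟩ := List.mem_map.1 hy
            have := hex a (List.mem_range.1 ha)
            rw [hu₂_def]
            simp [this]
          rw [foldl_wadd_zeros hzeros]
  | @elem op e₀ e₁ t h₀ h₁ ih₀ ih₁ =>
      obtain ⟨ihc₀, iha₀, ihb₀⟩ := ih₀
      obtain ⟨ihc₁, iha₁, ihb₁⟩ := ih₁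
      have it₀ := inferTy_of_hasTy h₀
      have it₁ := inferTy_of_hasTy h₁
      have ip₀ := inferTy_pad M h₀
      have ip₁ := inferTy_pad M h₁
      by_cases ht : t = []
      · subst ht
        have ea₀ := iha₀ [] IdxLe_nil_nil
        have ea₁ := iha₁ [] IdxLe_nil_nil
        obtain ⟨w₀, hw₀⟩ := ihc₀ [] IdxLe_nil_nil
        obtain ⟨w₁, hw₁⟩ := ihc₁ [] IdxLe_nil_nil
        refine ⟨fun i hi => ?_, fun i hi => ?_, fun i hi => absurd hi (PadReg_nil M i)⟩
        · obtain rfl := IdxLe_nil.1 hi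
          simp only [eval, it₀, it₁, Option.bind_eq_bind, Option.bind_some]
          split_ifs <;> simp [hw₀, hw₁]
        · obtain rfl := IdxLe_nil.1 hi
          simp only [eval, it₀, it₁, ip₀, ip₁, padT_nil, Option.bind_eq_bind, Option.bind_some]
          split_ifs <;> simp [ea₀, ea₁]
      · have hc1 : ¬ (op = .mul ∧ t = []) := fun h => ht h.2
        have hc2 : ¬ (op = .div ∧ t = []) := fun h => ht h.2
        have hc1' : ¬ (op = .mul ∧ padT M t = []) := fun h => ht ((padT_eq_nil M t).1 h.2)
        have hc2' : ¬ (op = .div ∧ padT M t = []) := fun h => ht ((padT_eq_nil M t).1 h.2)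
        have ev1 : ∀ j, eval Γ μ₁ (.binop op e₀ e₁) j =
            (eval Γ μ₁ e₀ j).bind fun v₀ =>
              (eval Γ μ₁ e₁ j).bind fun v₁ => some (applyOp op v₀ v₁) := by
          intro j
          simp only [eval, it₀, it₁, Option.bind_eq_bind, Option.bind_some, Option.pure_def,
            if_neg hc1, if_neg hc2]
        have ev2 : ∀ j, eval (padCtx M Γ) μ₂ (.binop op e₀ e₁) j =
            (eval (padCtx M Γ) μ₂ e₀ j).bind fun v₀ =>
              (eval (padCtx M Γ) μ₂ e₁ j).bind fun v₁ => some (applyOp op v₀ v₁) := by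
          intro j
          simp only [eval, ip₀, ip₁, Option.bind_eq_bind, Option.bind_some, Option.pure_def,
            if_neg hc1', if_neg hc2']
        refine ⟨fun i hi => ?_, fun i hi => ?_, fun i hi => ?_⟩
        · obtain ⟨w₀, hw₀⟩ := ihc₀ _ hi
          obtain ⟨w₁, hw₁⟩ := ihc₁ _ hi
          exact ⟨applyOp op w₀ w₁, by rw [ev1, hw₀, hw₁]; rfl⟩
        · rw [ev1, ev2, iha₀ _ hi, iha₁ _ hi]
        · rcases ihb₀ i hi with hz₀ | ⟨hn₀, hlink₀⟩
          · rcases ihb₁ i hi with hz₁ | ⟨hn₁, hlink₁⟩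
            · refine Or.inl ?_
              rw [ev2, hz₀, hz₁]
              cases op <;> simp [applyOp, wadd, wsub, wmul, wdiv]
            · cases op with
              | div =>
                  refine Or.inl ?_
                  rw [ev2, hz₀, hn₁]
                  simp [applyOp, wdiv]
              | add =>
                  refine Or.inr ⟨by rw [ev2, hz₀, hn₁]; simp [applyOp, wadd],
                    fun i' hi' hagr => ?_⟩
                  obtain ⟨w₀', hw₀'⟩ := ihc₀ _ hi'
                  rw [ev1, hw₀', hlink₁ _ hi' hagr]
                  cases w₀' <;> simp [applyOp, wadd]
              | sub =>
                  refine Or.inr ⟨by rw [ev2, hz₀, hn₁]; simp [applyOp, wsub],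
                    fun i' hi' hagr => ?_⟩
                  obtain ⟨w₀', hw₀'⟩ := ihc₀ _ hi'
                  rw [ev1, hw₀', hlink₁ _ hi' hagr]
                  cases w₀' <;> simp [applyOp, wsub]
              | mul =>
                  refine Or.inr ⟨by rw [ev2, hz₀, hn₁]; simp [applyOp, wmul],
                    fun i' hi' hagr => ?_⟩
                  obtain ⟨w₀', hw₀'⟩ := ihc₀ _ hi'
                  rw [ev1, hw₀', hlink₁ _ hi' hagr]
                  cases w₀' <;> simp [applyOp, wmul]
          · have hw₁p : ∃ w, eval (padCtx M Γ) μ₂ e₁ i = some w := by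
              rcases ihb₁ i hi with hz₁ | ⟨hn₁, -⟩
              · exact ⟨some 0, hz₁⟩
              · exact ⟨none, hn₁⟩
            obtain ⟨w₁p, hw₁p⟩ := hw₁p
            refine Or.inr ⟨by rw [ev2, hn₀, hw₁p]; simp [applyOp_none_left],
              fun i' hi' hagr => ?_⟩
            obtain ⟨w₁', hw₁'⟩ := ihc₁ _ hi'
            rw [ev1, hlink₀ _ hi' hagr, hw₁']
            simp [applyOp_none_left]
  | @smul e₀ e₁ t h₀ h₁ ih₀ ih₁ =>
      obtain ⟨ihc₀, iha₀, ihb₀⟩ := ih₀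
      obtain ⟨ihc₁, iha₁, ihb₁⟩ := ih₁
      have it₀ := inferTy_of_hasTy h₀
      have it₁ := inferTy_of_hasTy h₁
      have ip₀ := inferTy_pad M h₀
      have ip₁ := inferTy_pad M h₁
      rw [padT_nil] at ip₀
      have ev1 : ∀ j, eval Γ μ₁ (.binop .mul e₀ e₁) j =
          (eval Γ μ₁ e₀ []).bind fun v₀ =>
            (eval Γ μ₁ e₁ j).bind fun v₁ => some (wmul v₀ v₁) := by
        intro j
        simp [eval, it₀, it₁]
      have ev2 : ∀ j, eval (padCtx M Γ) μ₂ (.binop .mul e₀ e₁) j =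
          (eval (padCtx M Γ) μ₂ e₀ []).bind fun v₀ =>
            (eval (padCtx M Γ) μ₂ e₁ j).bind fun v₁ => some (wmul v₀ v₁) := by
        intro j
        simp [eval, ip₀, ip₁]
      obtain ⟨w₀, hw₀⟩ := ihc₀ [] IdxLe_nil_nil
      have hw₀p : eval (padCtx M Γ) μ₂ e₀ [] = some w₀ := by
        rw [← iha₀ [] IdxLe_nil_nil]; exact hw₀
      refine ⟨fun i hi => ?_, fun i hi => ?_, fun i hi => ?_⟩
      · obtain ⟨w₁, hw₁⟩ := ihc₁ _ hi
        exact ⟨wmul w₀ w₁, by rw [ev1, hw₀, hw₁]; rfl⟩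
      · rw [ev1, ev2, iha₀ [] IdxLe_nil_nil, iha₁ _ hi]
      · rcases ihb₁ i hi with hz₁ | ⟨hn₁, hlink₁⟩
        · cases w₀ with
          | none =>
              refine Or.inr ⟨by rw [ev2, hw₀p, hz₁]; simp [wmul_none_left],
                fun i' hi' hagr => ?_⟩
              obtain ⟨w₁', hw₁'⟩ := ihc₁ _ hi'
              rw [ev1, hw₀, hw₁']
              simp [wmul_none_left]
          | some a =>
              refine Or.inl ?_
              rw [ev2, hw₀p, hz₁]
              simp [wmul]
        · refine Or.inr ⟨by rw [ev2, hw₀p, hn₁]; simp [wmul_none_right],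
            fun i' hi' hagr => ?_⟩
          rw [ev1, hw₀, hlink₁ _ hi' hagr]
          simp [wmul_none_right]
  | @sdiv e₀ e₁ t h₀ h₁ ih₀ ih₁ =>
      obtain ⟨ihc₀, iha₀, ihb₀⟩ := ih₀
      obtain ⟨ihc₁, iha₁, ihb₁⟩ := ih₁
      have it₀ := inferTy_of_hasTy h₀
      have it₁ := inferTy_of_hasTy h₁
      have ip₀ := inferTy_pad M h₀
      have ip₁ := inferTy_pad M h₁
      rw [padT_nil] at ip₁
      have ev1 : ∀ j, eval Γ μ₁ (.binop .div e₀ e₁) j =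
          (eval Γ μ₁ e₀ j).bind fun v₀ =>
            (eval Γ μ₁ e₁ []).bind fun v₁ => some (wdiv v₀ v₁) := by
        intro j
        simp [eval, it₀, it₁]
      have ev2 : ∀ j, eval (padCtx M Γ) μ₂ (.binop .div e₀ e₁) j =
          (eval (padCtx M Γ) μ₂ e₀ j).bind fun v₀ =>
            (eval (padCtx M Γ) μ₂ e₁ []).bind fun v₁ => some (wdiv v₀ v₁) := by
        intro j
        simp [eval, ip₀, ip₁]
      obtain ⟨w₁, hw₁⟩ := ihc₁ [] IdxLe_nil_nil
      have hw₁p : eval (padCtx M Γ) μ₂ e₁ [] = some w₁ := by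
        rw [← iha₁ [] IdxLe_nil_nil]; exact hw₁
      refine ⟨fun i hi => ?_, fun i hi => ?_, fun i hi => ?_⟩
      · obtain ⟨w₀, hw₀⟩ := ihc₀ _ hi
        exact ⟨wdiv w₀ w₁, by rw [ev1, hw₀, hw₁]; rfl⟩
      · rw [ev1, ev2, iha₀ _ hi, iha₁ [] IdxLe_nil_nil]
      · rcases ihb₀ i hi with hz₀ | ⟨hn₀, hlink₀⟩
        · refine Or.inl ?_
          rw [ev2, hz₀, hw₁p]
          cases w₁ with
          | none => simp [wdiv]
          | some b =>
              simp only [Option.bind_some, wdiv]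
              split_ifs <;> simp_all [zero_div]
        · refine Or.inr ⟨by rw [ev2, hn₀, hw₁p]; simp [wdiv],
            fun i' hi' hagr => ?_⟩
          rw [ev1, hlink₀ _ hi' hagr, hw₁]
          simp [wdiv]

/-- **Evaluation agreement under padding**: if `μ₁` contains the unpadded domain,
`μ₂` contains the padded domain, `μ₂` agrees with `μ₁` on `i ≤ Γ(x)` and is zero
on padding regions, then for `Γ ⊢ e : t` the unpadded and padded evaluations
agree for every `i ≤ t`. -/
theorem eval_agreement (V : Type) [Field V] [DecidableEq V] (M : ℕ) (hM : 1 ≤ M)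
    (Γ : Ctx) (μ₁ μ₂ : Store V)
    (h1 : ∀ x t, Γ x = some t → ∀ i, IdxLe i t → μ₁ (x, i) ≠ none)
    (h2 : ∀ x t, Γ x = some t → ∀ i, IdxLe i (padT M t) → μ₂ (x, i) ≠ none)
    (heq : ∀ x t, Γ x = some t → ∀ i, IdxLe i t → μ₂ (x, i) = μ₁ (x, i))
    (hz : ∀ x t, Γ x = some t → ∀ i, PadReg M t i → μ₂ (x, i) = some (some 0))
    {e : Expr} {t : Ty} (h : HasTy Γ e t) :
    ∀ i, IdxLe i t → eval Γ μ₁ e i = eval (padCtx M Γ) μ₂ e i :=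
  (eval_master V M hM Γ μ₁ μ₂ h1 h2 heq hz h).2.1
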